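/- Fix a pyramid 𝛑 of shape a partition 𝛌 ⊢ N, and let Tab^cc_𝕜(𝛑) denote the set of column-connected fillings of 𝛑 with entries in a field 𝕜 of characteristic 0 (or any field, treating '+1' in the prime field). Let W_row ⊆ S_N be the subgroup of permutations preserving each row of 𝛑, and W_col ⊆ S_N the subgroup generated by column-swaps (permutations exchanging entire columns of equal height). Then two column-connected tableaux A, A' ∈ Tab^cc_𝕜(𝛑) lie in the same W_row-orbit if and only if they lie in the same W_col-orbit. -/

import Mathlib

/-- Fix a pyramid of shape a partition of `N`, modelled as a finite set `P` of boxes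
`(c, r)` (column `c ∈ ℤ`, row `r < n`, rows numbered top to bottom) such that every box
strictly above the bottom row sits directly above a box of the row beneath.  Tableaux are
fillings `A : P → 𝕜`; a tableau is column-connected if entries increase by `1` going up
each column.  `S_N` (permutations of the boxes) acts by `(w·A)_b = A_{w(b)}`; `W_row` is
the subgroup of row-preserving permutations and `W_col` is generated by the column-swaps
(exchanging two columns of equal height box-by-box).  Then two column-connected tableaux
lie in the same `W_row`-orbit iff they lie in the same `W_col`-orbit. -/
lemma swap_closure_aux {α β : Type*} [Fintype α] [DecidableEq α]
    (ρ : α → β) : ∀ (k : ℕ) (f : Equiv.Perm α), f.support.card ≤ k →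
    (∀ a, ρ (f a) = ρ a) →
    f ∈ Subgroup.closure {σ : Equiv.Perm α | ∃ a b, ρ a = ρ b ∧ σ = Equiv.swap a b} := by
  intro k
  induction k with
  | zero =>
    intro f hf _
    have : f.support = ∅ := Finset.card_eq_zero.mp (Nat.le_zero.mp hf)
    rw [Equiv.Perm.support_eq_empty_iff.mp this]
    exact Subgroup.one_mem _
  | succ k ih =>
    intro f hf hρ
    rcases eq_or_ne f 1 with rfl | h1
    · exact Subgroup.one_mem _
    · have hne : f.support.Nonempty := by
        rw [Finset.nonempty_iff_ne_empty, Ne, Equiv.Perm.support_eq_empty_iff]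
        exact h1
      obtain ⟨a, ha⟩ := hne
      have hfa : f a ≠ a := Equiv.Perm.mem_support.mp ha
      set g := Equiv.swap a (f a) * f with hg
      have hcard : g.support.card < f.support.card :=
        Equiv.Perm.card_support_swap_mul hfa
      have hρswap : ∀ x, ρ (Equiv.swap a (f a) x) = ρ x := by
        intro x
        rcases eq_or_ne x a with rfl | hx1
        · rw [Equiv.swap_apply_left]; exact hρ x
        rcases eq_or_ne x (f a) with rfl | hx2
        · rw [Equiv.swap_apply_right]; exact (hρ a).symm
        · rw [Equiv.swap_apply_of_ne_of_ne hx1 hx2]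
      have hρg : ∀ x, ρ (g x) = ρ x := fun x => by
        rw [hg]; simpa using (hρswap (f x)).trans (hρ x)
      have hgmem := ih g (by omega) hρg
      have hswapmem : Equiv.swap a (f a) ∈
          Subgroup.closure {σ : Equiv.Perm α | ∃ a b, ρ a = ρ b ∧ σ = Equiv.swap a b} :=
        Subgroup.subset_closure ⟨a, f a, (hρ a).symm, rfl⟩
      have : f = Equiv.swap a (f a) * g := by
        rw [hg, ← mul_assoc, Equiv.swap_mul_self, one_mul]
      rw [this]
      exact Subgroup.mul_mem _ hswapmem hgmem

theorem stmt12 {𝕜 : Type*} [Field 𝕜] (n : ℕ) (P : Finset (ℤ × ℕ))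
    (hrows : ∀ b ∈ P, b.2 < n)
    (hpyr : ∀ (c : ℤ) (r : ℕ), (c, r) ∈ P → r + 1 < n → (c, r + 1) ∈ P)
    (A A' : {b : ℤ × ℕ // b ∈ P} → 𝕜)
    (hA : ∀ (c : ℤ) (r : ℕ) (h1 : (c, r) ∈ P) (h2 : (c, r + 1) ∈ P),
      A ⟨(c, r), h1⟩ = A ⟨(c, r + 1), h2⟩ + 1)
    (hA' : ∀ (c : ℤ) (r : ℕ) (h1 : (c, r) ∈ P) (h2 : (c, r + 1) ∈ P),
      A' ⟨(c, r), h1⟩ = A' ⟨(c, r + 1), h2⟩ + 1) :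
    (∃ σ : Equiv.Perm {b : ℤ × ℕ // b ∈ P},
        (∀ b, ((σ b : ℤ × ℕ)).2 = ((b : ℤ × ℕ)).2) ∧ A' = A ∘ σ) ↔
    (∃ σ ∈ Subgroup.closure
        {σ : Equiv.Perm {b : ℤ × ℕ // b ∈ P} |
          ∃ c₁ c₂ : ℤ, (∀ r : ℕ, (c₁, r) ∈ P ↔ (c₂, r) ∈ P) ∧
            ∀ b : {b : ℤ × ℕ // b ∈ P},
              ((σ b : ℤ × ℕ)) =
                if ((b : ℤ × ℕ)).1 = c₁ then (c₂, ((b : ℤ × ℕ)).2)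
                else if ((b : ℤ × ℕ)).1 = c₂ then (c₁, ((b : ℤ × ℕ)).2)
                else (b : ℤ × ℕ)},
      A' = A ∘ σ) := by
  classical
  -- downward closure of columns
  have hdown : ∀ (c : ℤ) (r r' : ℕ), (c, r) ∈ P → r ≤ r' → r' < n → (c, r') ∈ P := by
    intro c r r' h hle hlt
    induction r', hle using Nat.le_induction with
    | base => exact h
    | succ r'' hr'' ih => exact hpyr c r'' (ih (by omega)) hlt
  -- values of a column-connected tableau from the bottom-row value
  have key : ∀ (B : {b : ℤ × ℕ // b ∈ P} → 𝕜),
      (∀ (c : ℤ) (r : ℕ) (h1 : (c, r) ∈ P) (h2 : (c, r + 1) ∈ P),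
        B ⟨(c, r), h1⟩ = B ⟨(c, r + 1), h2⟩ + 1) →
      ∀ (k : ℕ) (c : ℤ) (r : ℕ) (h : (c, r) ∈ P), n - 1 - r = k →
      B ⟨(c, r), h⟩ =
        (if hb : (c, n - 1) ∈ P then B ⟨(c, n - 1), hb⟩ else 0) + (k : 𝕜) := by
    intro B hB k
    induction k with
    | zero =>
      intro c r h hk
      have hr : r < n := hrows _ h
      have : r = n - 1 := by omega
      subst this
      rw [dif_pos h, Nat.cast_zero, add_zero]
    | succ k ih =>
      intro c r h hk
      have hr : r < n := hrows _ h
      have h2 : (c, r + 1) ∈ P := hpyr c r h (by omega)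
      rw [hB c r h h2, ih c (r + 1) h2 (by omega)]
      push_cast; ring
  let v : ℤ → 𝕜 := fun c => if hb : (c, n - 1) ∈ P then A ⟨(c, n - 1), hb⟩ else 0
  let v' : ℤ → 𝕜 := fun c => if hb : (c, n - 1) ∈ P then A' ⟨(c, n - 1), hb⟩ else 0
  have hvalA : ∀ (c : ℤ) (r : ℕ) (h : (c, r) ∈ P),
      A ⟨(c, r), h⟩ = v c + ((n - 1 - r : ℕ) : 𝕜) := fun c r h => key A hA _ c r h rfl
  have hvalA' : ∀ (c : ℤ) (r : ℕ) (h : (c, r) ∈ P),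
      A' ⟨(c, r), h⟩ = v' c + ((n - 1 - r : ℕ) : 𝕜) := fun c r h => key A' hA' _ c r h rfl
  -- columns
  set C : Finset ℤ := P.image Prod.fst with hC
  have hmemC : ∀ b ∈ P, Prod.fst b ∈ C := fun b hb => Finset.mem_image_of_mem _ hb
  have hex : ∀ c ∈ C, ∃ r, (c, r) ∈ P := by
    intro c hc
    obtain ⟨b, hb, rfl⟩ := Finset.mem_image.mp hc
    exact ⟨b.2, by rwa [Prod.mk.eta]⟩
  let top : ℤ → ℕ := fun c => if h : ∃ r, (c, r) ∈ P then Nat.find h else 0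
  have htopmem : ∀ (c : ℤ) (h : ∃ r, (c, r) ∈ P), (c, top c) ∈ P := by
    intro c h
    simp only [top, dif_pos h]
    exact Nat.find_spec h
  have htople : ∀ (c : ℤ) (r : ℕ), (c, r) ∈ P → top c ≤ r := by
    intro c r hr
    have h : ∃ r, (c, r) ∈ P := ⟨r, hr⟩
    simp only [top, dif_pos h]
    exact Nat.find_min' h hr
  have hchar : ∀ (c : ℤ), (∃ r, (c, r) ∈ P) → ∀ r : ℕ, ((c, r) ∈ P ↔ top c ≤ r ∧ r < n) := by
    intro c hex0 r
    constructor
    · intro h; exact ⟨htople c r h, hrows _ h⟩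
    · rintro ⟨h1, h2⟩
      exact hdown c (top c) r (htopmem c hex0) h1 h2
  constructor
  · rintro ⟨σ, hσrow, hσA⟩
    -- box-level row counts agree
    have hbox : ∀ (r : ℕ) (x : 𝕜),
        (Finset.univ.filter fun b : {b : ℤ × ℕ // b ∈ P} => (b : ℤ × ℕ).2 = r ∧ A' b = x).card
          = (Finset.univ.filter fun b : {b : ℤ × ℕ // b ∈ P} => (b : ℤ × ℕ).2 = r ∧ A b = x).card := by
      intro r x
      apply Finset.card_bij (fun b _ => σ b)
      · intro b hb
        simp only [Finset.mem_filter, Finset.mem_univ, true_and] at hb ⊢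
        exact ⟨(hσrow b).trans hb.1, by rw [← hb.2, hσA]; rfl⟩
      · intro b1 _ b2 _ h
        exact σ.injective h
      · intro b hb
        simp only [Finset.mem_filter, Finset.mem_univ, true_and] at hb
        refine ⟨σ⁻¹ b, Finset.mem_filter.mpr ⟨Finset.mem_univ _, ?_, ?_⟩, by simp⟩
        · rw [← hb.1]
          have h2 := hσrow (σ⁻¹ b)
          rw [Equiv.Perm.inv_def, Equiv.apply_symm_apply] at h2
          exact h2.symm
        · rw [hσA]
          simpa using hb.2
    -- transfer box counts to column counts
    have transfer : ∀ (B : {b : ℤ × ℕ // b ∈ P} → 𝕜) (vB : ℤ → 𝕜),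
        (∀ (c : ℤ) (rr : ℕ) (h : (c, rr) ∈ P), B ⟨(c, rr), h⟩ = vB c + ((n - 1 - rr : ℕ) : 𝕜)) →
        ∀ (r : ℕ) (x : 𝕜),
        (Finset.univ.filter fun c : {c : ℤ // c ∈ C} => ((c : ℤ), r) ∈ P ∧ vB c = x).card =
        (Finset.univ.filter fun b : {b : ℤ × ℕ // b ∈ P} =>
          (b : ℤ × ℕ).2 = r ∧ B b = x + ((n - 1 - r : ℕ) : 𝕜)).card := by
      intro B vB hval r x
      refine Finset.card_bij
        (fun c hc => (⟨((c : ℤ), r), (Finset.mem_filter.mp hc).2.1⟩ : {b : ℤ × ℕ // b ∈ P}))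
        ?_ ?_ ?_
      · intro c hc
        have hc' := (Finset.mem_filter.mp hc).2
        refine Finset.mem_filter.mpr ⟨Finset.mem_univ _, rfl, ?_⟩
        rw [hval _ _ hc'.1, hc'.2]
      · intro c1 hc1 c2 hc2 h
        exact Subtype.ext (congrArg (fun b : {b : ℤ × ℕ // b ∈ P} => (b : ℤ × ℕ).1) h)
      · intro b hb
        have hb' := (Finset.mem_filter.mp hb).2
        have hbP : ((b : ℤ × ℕ).1, r) ∈ P := by
          rw [← hb'.1, Prod.mk.eta]; exact b.2
        have hbeq : (⟨((b : ℤ × ℕ).1, r), hbP⟩ : {b : ℤ × ℕ // b ∈ P}) = b := by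
          apply Subtype.ext
          show ((b : ℤ × ℕ).1, r) = (b : ℤ × ℕ)
          rw [← hb'.1]
        refine ⟨⟨(b : ℤ × ℕ).1, hmemC _ b.2⟩, Finset.mem_filter.mpr ⟨Finset.mem_univ _, hbP, ?_⟩, ?_⟩
        · have := hval _ _ hbP
          rw [hbeq] at this
          rw [hb'.2] at this
          exact add_right_cancel this.symm
        · exact Subtype.ext (congrArg (fun b : {b : ℤ × ℕ // b ∈ P} => (b : ℤ × ℕ)) hbeq)
    have hScard : ∀ (r : ℕ) (x : 𝕜),
        (Finset.univ.filter fun c : {c : ℤ // c ∈ C} => ((c : ℤ), r) ∈ P ∧ v' c = x).card =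
        (Finset.univ.filter fun c : {c : ℤ // c ∈ C} => ((c : ℤ), r) ∈ P ∧ v c = x).card := by
      intro r x
      rw [transfer A' v' hvalA' r x, transfer A v hvalA r x, hbox r (x + ((n - 1 - r : ℕ) : 𝕜))]
    -- counts of columns with given top row and bottom value agree
    have htoplt : ∀ c : {c : ℤ // c ∈ C}, top (c : ℤ) < n :=
      fun c => hrows _ (htopmem _ (hex _ c.2))
    have hTcard : ∀ (r : ℕ) (x : 𝕜),
        (Finset.univ.filter fun c : {c : ℤ // c ∈ C} => top (c : ℤ) = r ∧ v' c = x).card =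
        (Finset.univ.filter fun c : {c : ℤ // c ∈ C} => top (c : ℤ) = r ∧ v c = x).card := by
      intro r x
      rcases Nat.lt_or_ge r n with hr | hr
      · rcases Nat.eq_zero_or_pos r with rfl | hrpos
        · have hiff : ∀ (w : ℤ → 𝕜) (c : {c : ℤ // c ∈ C}),
              (top (c : ℤ) = 0 ∧ w c = x) ↔ (((c : ℤ), 0) ∈ P ∧ w c = x) := by
            intro w c
            constructor
            · rintro ⟨h1, h2⟩
              exact ⟨h1 ▸ htopmem _ (hex _ c.2), h2⟩
            · rintro ⟨h1, h2⟩
              exact ⟨Nat.le_zero.mp (htople _ 0 h1), h2⟩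
          rw [Finset.filter_congr (fun c _ => hiff v' c), Finset.filter_congr (fun c _ => hiff v c)]
          exact hScard 0 x
        · have hiff : ∀ (w : ℤ → 𝕜) (c : {c : ℤ // c ∈ C}),
              (top (c : ℤ) = r ∧ w c = x) ↔
              ((((c : ℤ), r) ∈ P ∧ w c = x) ∧ ¬ ((((c : ℤ), r - 1) ∈ P) ∧ w c = x)) := by
            intro w c
            constructor
            · rintro ⟨h1, h2⟩
              refine ⟨⟨hdown _ _ _ (htopmem _ (hex _ c.2)) (by omega) hr, h2⟩, ?_⟩
              rintro ⟨h3, -⟩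
              have := htople _ _ h3
              omega
            · rintro ⟨⟨h1, h2⟩, h3⟩
              refine ⟨?_, h2⟩
              have hle := htople _ _ h1
              by_contra hne
              have : ((c : ℤ), r - 1) ∈ P :=
                hdown _ _ _ (htopmem _ (hex _ c.2)) (by omega) (by omega)
              exact h3 ⟨this, h2⟩
          have hsub : ∀ (w : ℤ → 𝕜),
              (Finset.univ.filter fun c : {c : ℤ // c ∈ C} => ((c : ℤ), r - 1) ∈ P ∧ w c = x) ⊆
              (Finset.univ.filter fun c : {c : ℤ // c ∈ C} => ((c : ℤ), r) ∈ P ∧ w c = x) := by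
            intro w c hc
            have hc' := (Finset.mem_filter.mp hc).2
            refine Finset.mem_filter.mpr ⟨Finset.mem_univ _, ?_, hc'.2⟩
            have h4 := hpyr _ _ hc'.1 (by omega)
            rwa [Nat.sub_add_cancel (by omega)] at h4
          have hdiff : ∀ (w : ℤ → 𝕜),
              (Finset.univ.filter fun c : {c : ℤ // c ∈ C} => top (c : ℤ) = r ∧ w c = x) =
              (Finset.univ.filter fun c : {c : ℤ // c ∈ C} => ((c : ℤ), r) ∈ P ∧ w c = x) \
              (Finset.univ.filter fun c : {c : ℤ // c ∈ C} => ((c : ℤ), r - 1) ∈ P ∧ w c = x) := by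
            intro w
            ext c
            simp only [Finset.mem_filter, Finset.mem_sdiff, Finset.mem_univ, true_and]
            rw [hiff w c]
          rw [hdiff v', hdiff v, Finset.card_sdiff_of_subset (hsub v'), Finset.card_sdiff_of_subset (hsub v),
            hScard r x, hScard (r - 1) x]
      · have hempty : ∀ (w : ℤ → 𝕜),
            (Finset.univ.filter fun c : {c : ℤ // c ∈ C} => top (c : ℤ) = r ∧ w c = x) = ∅ := by
          intro w
          apply Finset.filter_false_of_mem
          intro c _
          rintro ⟨h1, -⟩
          have := htoplt c
          omega
        rw [hempty v', hempty v]
    -- fibers of (top, bottom-value) have the same cardinality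
    let φ : {c : ℤ // c ∈ C} → ℕ × 𝕜 := fun c => (top (c : ℤ), v (c : ℤ))
    let φ' : {c : ℤ // c ∈ C} → ℕ × 𝕜 := fun c => (top (c : ℤ), v' (c : ℤ))
    have hfib : ∀ y : ℕ × 𝕜, Fintype.card {c : {c : ℤ // c ∈ C} // φ' c = y}
        = Fintype.card {c : {c : ℤ // c ∈ C} // φ c = y} := by
      intro y
      rw [Fintype.card_subtype, Fintype.card_subtype]
      have h1 : ∀ (w : ℤ → 𝕜) (c : {c : ℤ // c ∈ C}),
          ((top (c : ℤ), w (c : ℤ)) = y) ↔ (top (c : ℤ) = y.1 ∧ w (c : ℤ) = y.2) := by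
        intro w c; rw [Prod.ext_iff]
      rw [Finset.filter_congr (fun c _ => h1 v' c), Finset.filter_congr (fun c _ => h1 v c)]
      exact hTcard y.1 y.2
    let e : ∀ y : ℕ × 𝕜, {c : {c : ℤ // c ∈ C} // φ' c = y} ≃ {c : {c : ℤ // c ∈ C} // φ c = y} :=
      fun y => Fintype.equivOfCardEq (hfib y)
    let f₀ : Equiv.Perm {c : ℤ // c ∈ C} :=
      (Equiv.sigmaFiberEquiv φ').symm.trans
        ((Equiv.sigmaCongrRight e).trans (Equiv.sigmaFiberEquiv φ))
    have hf₀ : ∀ c, φ (f₀ c) = φ' c := by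
      intro c
      have h : f₀ c = ((e (φ' c)) ⟨c, rfl⟩ : {d : {c : ℤ // c ∈ C} // φ d = φ' c}).1 := rfl
      rw [h]
      exact ((e (φ' c)) ⟨c, rfl⟩).2
    have hf₀top : ∀ c, top ((f₀ c) : ℤ) = top (c : ℤ) := fun c => congrArg Prod.fst (hf₀ c)
    have hf₀v : ∀ c, v ((f₀ c) : ℤ) = v' (c : ℤ) := fun c => congrArg Prod.snd (hf₀ c)
    have hclos := swap_closure_aux (fun c : {c : ℤ // c ∈ C} => top (c : ℤ))
      (f₀.support.card) f₀ le_rfl hf₀top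
    have hcols_of_top : ∀ a b : {c : ℤ // c ∈ C}, top (a : ℤ) = top (b : ℤ) →
        ∀ r : ℕ, ((a : ℤ), r) ∈ P ↔ ((b : ℤ), r) ∈ P := by
      intro a b hab r
      rw [hchar _ (hex _ a.2) r, hchar _ (hex _ b.2) r, hab]
    have main : ∀ g : Equiv.Perm {c : ℤ // c ∈ C},
        g ∈ Subgroup.closure {σ₀ : Equiv.Perm {c : ℤ // c ∈ C} |
          ∃ a b : {c : ℤ // c ∈ C}, top (a : ℤ) = top (b : ℤ) ∧ σ₀ = Equiv.swap a b} →
        (∀ (a : {c : ℤ // c ∈ C}) (r : ℕ), (((a : ℤ), r) ∈ P ↔ (((g a) : ℤ), r) ∈ P)) ∧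
        ∃ τ ∈ Subgroup.closure
          {σ : Equiv.Perm {b : ℤ × ℕ // b ∈ P} |
            ∃ c₁ c₂ : ℤ, (∀ r : ℕ, (c₁, r) ∈ P ↔ (c₂, r) ∈ P) ∧
              ∀ b : {b : ℤ × ℕ // b ∈ P},
                ((σ b : ℤ × ℕ)) =
                  if ((b : ℤ × ℕ)).1 = c₁ then (c₂, ((b : ℤ × ℕ)).2)
                  else if ((b : ℤ × ℕ)).1 = c₂ then (c₁, ((b : ℤ × ℕ)).2)
                  else (b : ℤ × ℕ)},
          ∀ b : {b : ℤ × ℕ // b ∈ P},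
            (τ b : ℤ × ℕ) = (((g ⟨((b : ℤ × ℕ)).1, hmemC _ b.2⟩) : ℤ), ((b : ℤ × ℕ)).2) := by
      intro g hg
      induction hg using Subgroup.closure_induction with
      | mem g' hg' =>
        obtain ⟨a, b, hab, rfl⟩ := hg'
        have hcols := hcols_of_top a b hab
        have hswapP : ∀ (q : ℤ) (r : ℕ),
            (q, r) ∈ P ↔ (Equiv.swap (a : ℤ) (b : ℤ) q, r) ∈ P := by
          intro q r
          rcases eq_or_ne q (a : ℤ) with rfl | h1
          · rw [Equiv.swap_apply_left]; exact hcols r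
          rcases eq_or_ne q (b : ℤ) with rfl | h2
          · rw [Equiv.swap_apply_right]; exact (hcols r).symm
          · rw [Equiv.swap_apply_of_ne_of_ne h1 h2]
        have hcoord : ∀ c : {c : ℤ // c ∈ C},
            ((Equiv.swap a b c) : ℤ) = Equiv.swap (a : ℤ) (b : ℤ) (c : ℤ) := by
          intro c
          rcases eq_or_ne c a with rfl | h1
          · rw [Equiv.swap_apply_left, Equiv.swap_apply_left]
          rcases eq_or_ne c b with rfl | h2
          · rw [Equiv.swap_apply_right, Equiv.swap_apply_right]
          · rw [Equiv.swap_apply_of_ne_of_ne h1 h2,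
              Equiv.swap_apply_of_ne_of_ne (Subtype.coe_injective.ne h1)
                (Subtype.coe_injective.ne h2)]
        let τ : Equiv.Perm {b : ℤ × ℕ // b ∈ P} :=
          Equiv.subtypeEquiv (Equiv.prodCongr (Equiv.swap (a : ℤ) (b : ℤ)) (Equiv.refl ℕ))
            (fun p => hswapP p.1 p.2)
        refine ⟨fun c r => by rw [hcoord c]; exact hswapP (c : ℤ) r, τ,
          Subgroup.subset_closure ⟨(a : ℤ), (b : ℤ), hcols, fun b0 => ?_⟩, fun b0 => ?_⟩
        · show (Equiv.swap (a : ℤ) (b : ℤ) ((b0 : ℤ × ℕ)).1, ((b0 : ℤ × ℕ)).2) = _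
          rw [Equiv.swap_apply_def]
          split_ifs <;> rfl
        · show (Equiv.swap (a : ℤ) (b : ℤ) ((b0 : ℤ × ℕ)).1, ((b0 : ℤ × ℕ)).2) = _
          rw [hcoord ⟨((b0 : ℤ × ℕ)).1, hmemC _ b0.2⟩]
      | one => exact ⟨fun a r => Iff.rfl, 1, Subgroup.one_mem _, fun b => Prod.mk.eta.symm⟩
      | mul g1 g2 hg1 hg2 p1 p2 =>
        obtain ⟨c1, τ1, hτ1m, hτ1⟩ := p1
        obtain ⟨c2, τ2, hτ2m, hτ2⟩ := p2
        refine ⟨fun a r => (c2 a r).trans (c1 (g2 a) r), τ1 * τ2,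
          Subgroup.mul_mem _ hτ1m hτ2m, ?_⟩
        intro b0
        have h2 := hτ2 b0
        have e1 : (⟨((τ2 b0 : ℤ × ℕ)).1, hmemC _ (τ2 b0).2⟩ : {c : ℤ // c ∈ C})
            = g2 ⟨((b0 : ℤ × ℕ)).1, hmemC _ b0.2⟩ := Subtype.ext (congrArg Prod.fst h2)
        calc ((τ1 * τ2) b0 : ℤ × ℕ) = (τ1 (τ2 b0) : ℤ × ℕ) := rfl
          _ = ((g1 ⟨((τ2 b0 : ℤ × ℕ)).1, hmemC _ (τ2 b0).2⟩ : ℤ), ((τ2 b0 : ℤ × ℕ)).2) :=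
              hτ1 (τ2 b0)
          _ = ((g1 (g2 ⟨((b0 : ℤ × ℕ)).1, hmemC _ b0.2⟩) : ℤ), ((b0 : ℤ × ℕ)).2) := by
              rw [e1, congrArg Prod.snd h2]
      | inv g1 hg1 p1 =>
        obtain ⟨c1, τ1, hτ1m, hτ1⟩ := p1
        have cinv : ∀ (a : {c : ℤ // c ∈ C}) (r : ℕ),
            ((a : ℤ), r) ∈ P ↔ (((g1⁻¹ a) : ℤ), r) ∈ P := by
          intro a r
          have h := c1 (g1⁻¹ a) r
          rw [Equiv.Perm.inv_def, Equiv.apply_symm_apply] at h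
          exact h.symm
        refine ⟨cinv, τ1⁻¹, Subgroup.inv_mem _ hτ1m, ?_⟩
        intro b0
        have hm : (((g1⁻¹ ⟨((b0 : ℤ × ℕ)).1, hmemC _ b0.2⟩) : ℤ), ((b0 : ℤ × ℕ)).2) ∈ P := by
          rw [← cinv ⟨((b0 : ℤ × ℕ)).1, hmemC _ b0.2⟩ ((b0 : ℤ × ℕ)).2]
          exact b0.2
        set Z : {b : ℤ × ℕ // b ∈ P} :=
          ⟨(((g1⁻¹ ⟨((b0 : ℤ × ℕ)).1, hmemC _ b0.2⟩) : ℤ), ((b0 : ℤ × ℕ)).2), hm⟩ with hZ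
        have hb' : τ1 Z = b0 := by
          apply Subtype.ext
          rw [hτ1 Z]
          have hW : (⟨((Z : ℤ × ℕ)).1, hmemC _ Z.2⟩ : {c : ℤ // c ∈ C})
              = g1⁻¹ ⟨((b0 : ℤ × ℕ)).1, hmemC _ b0.2⟩ := Subtype.ext rfl
          rw [hW, Equiv.Perm.inv_def, Equiv.apply_symm_apply]
        have hinv : τ1⁻¹ b0 = Z := by
          rw [← hb', Equiv.Perm.inv_def, Equiv.symm_apply_apply]
        rw [hinv]
    obtain ⟨hcond, τ, hτmem, hτ⟩ := main f₀ hclos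
    refine ⟨τ, hτmem, ?_⟩
    funext b
    have hbP : (((b : ℤ × ℕ)).1, ((b : ℤ × ℕ)).2) ∈ P := b.2
    have h1 : A' b = v' ((b : ℤ × ℕ)).1 + ((n - 1 - ((b : ℤ × ℕ)).2 : ℕ) : 𝕜) := hvalA' _ _ hbP
    have hτb : (τ b : ℤ × ℕ)
        = (((f₀ ⟨((b : ℤ × ℕ)).1, hmemC _ b.2⟩) : ℤ), ((b : ℤ × ℕ)).2) := hτ b
    have hmτ : ((((f₀ ⟨((b : ℤ × ℕ)).1, hmemC _ b.2⟩) : ℤ)), ((b : ℤ × ℕ)).2) ∈ P := by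
      rw [← hτb]; exact (τ b).2
    have h2 : A (τ b)
        = v ((f₀ ⟨((b : ℤ × ℕ)).1, hmemC _ b.2⟩) : ℤ) + ((n - 1 - ((b : ℤ × ℕ)).2 : ℕ) : 𝕜) := by
      have h3 := hvalA _ _ hmτ
      rwa [show (⟨((((f₀ ⟨((b : ℤ × ℕ)).1, hmemC _ b.2⟩) : ℤ)), ((b : ℤ × ℕ)).2), hmτ⟩
          : {b : ℤ × ℕ // b ∈ P}) = τ b from Subtype.ext hτb.symm] at h3
    show A' b = A (τ b)
    rw [h1, h2, hf₀v]
  · rintro ⟨σ, hσmem, hσA⟩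
    refine ⟨σ, ?_, hσA⟩
    clear hσA
    induction hσmem using Subgroup.closure_induction with
    | mem x hx =>
      obtain ⟨c₁, c₂, _, hform⟩ := hx
      intro b
      rw [hform b]
      split_ifs <;> rfl
    | one => intro b; rfl
    | mul x y hx hy px py =>
      intro b
      calc ((x (y b) : ℤ × ℕ)).2 = ((y b : ℤ × ℕ)).2 := px (y b)
        _ = ((b : ℤ × ℕ)).2 := py b
    | inv x hx px =>
      intro b
      have h := px (x⁻¹ b)
      rw [Equiv.Perm.inv_def, Equiv.apply_symm_apply] at h
      exact h.symm
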